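/- Assume the pre-diffeo-valued field structure is dense, and set I := Q ∩ M. Then: (1) R ≠ K and Q ≠ K; (2) I is a proper ideal of Q, and moreover r·i ∈ I for every r ∈ R and i ∈ I, so I is also a proper ideal of R; (3) every element of K can be written as q₁/q₂ with q₁, q₂ ∈ Q and q₂ ≠ 0 (so Frac(Q) = Frac(R) = K); (4) Q is a local ring with maximal ideal I, i.e. every element of Q \ I is a unit of Q; (5) I ≠ 0. -/

import Mathlib

def AlgebraicOverPrime (p : ℕ) {K : Type*} [Field K] [CharP K p] (q : K) : Prop :=
  ∃ f : Polynomial (ZMod p), f ≠ 0 ∧ Polynomial.eval₂ (ZMod.castHom dvd_rfl K) q f = 0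

structure PreDiffeoValued (p : ℕ) (K : Type*) [Field K]
    (Γ : Type*) [AddCommGroup Γ] [LinearOrder Γ] [IsOrderedAddMonoid Γ]
    (k : Type*) [Field k] (D : Type*) [AddCommGroup D] where
  v : K → WithTop Γ
  v_surj : ∀ γ : Γ, ∃ x : K, v x = (γ : WithTop Γ)
  v_eq_top_iff : ∀ x : K, v x = ⊤ ↔ x = 0
  v_mul : ∀ x y : K, v (x * y) = v x + v y
  v_add : ∀ x y : K, min (v x) (v y) ≤ v (x + y)
  O : Subring K
  mem_O_iff : ∀ x : K, x ∈ O ↔ 0 ≤ v x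
  res : K → k
  res_add : ∀ x ∈ O, ∀ y ∈ O, res (x + y) = res x + res y
  res_mul : ∀ x ∈ O, ∀ y ∈ O, res (x * y) = res x * res y
  res_one : res 1 = 1
  res_surjective : ∀ z : k, ∃ x ∈ O, res x = z
  res_eq_zero_iff : ∀ x ∈ O, (res x = 0 ↔ 0 < v x)
  smul : K → D → D
  smul_add : ∀ a ∈ O, ∀ x y : D, smul a (x + y) = smul a x + smul a y
  add_smul : ∀ a ∈ O, ∀ b ∈ O, ∀ x : D, smul (a + b) x = smul a x + smul b x
  mul_smul : ∀ a ∈ O, ∀ b ∈ O, ∀ x : D, smul (a * b) x = smul a (smul b x)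
  one_smul : ∀ x : D, smul 1 x = x
  divisible : ∀ a ∈ O, a ≠ 0 → ∀ y : D, ∃ x : D, smul a x = y
  total : ∀ x y : D, (∃ a ∈ O, x = smul a y) ∨ (∃ a ∈ O, y = smul a x)
  phi : k → D
  phi_add : ∀ z w : k, phi (z + w) = phi z + phi w
  phi_injective : Function.Injective phi
  phi_smul : ∀ a ∈ O, ∀ z : k, phi (res a * z) = smul a (phi z)
  R : Subring K
  R_le_O : (R : Set K) ⊆ (O : Set K)
  d : K → k
  d_add : ∀ x ∈ R, ∀ y ∈ R, d (x + y) = d x + d y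
  d_leibniz : ∀ x ∈ R, ∀ y ∈ R, d (x * y) = res x * d y + res y * d x
  d_surjective : ∀ z : k, ∃ x ∈ R, d x = z
  pi : K → D
  pi_add : ∀ x ∈ O, ∀ y ∈ O, pi (x + y) = pi x + pi y
  pi_qsmul : ∀ q ∈ R, d q = 0 → ∀ x ∈ O, pi (q * x) = smul q (pi x)
  pi_surjective : ∀ y : D, ∃ x ∈ O, pi x = y
  pi_eq_zero_iff : ∀ x ∈ O, (pi x = 0 ↔ x ∈ R ∧ d x = 0)
  pi_eq_phi_d : ∀ x ∈ R, pi x = phi (d x)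
  char_two_sq : p = 2 → ∀ a ∈ O, a ^ 2 ∈ R ∧ d (a ^ 2) = 0
  char_odd_pi : p ≠ 2 → ∀ a ∈ O, ∀ b ∈ O, pi (a * b) = smul a (pi b) + smul b (pi a)

/-- A pre-diffeo-valued field structure together with the secondary valuation
`val : D → Γ ∪ {∞}`. -/
structure PreDiffeoValuedS (p : ℕ) (K : Type*) [Field K]
    (Γ : Type*) [AddCommGroup Γ] [LinearOrder Γ] [IsOrderedAddMonoid Γ]
    (k : Type*) [Field k] (D : Type*) [AddCommGroup D]
    extends PreDiffeoValued p K Γ k D where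
  val : D → WithTop Γ
  val_nonpos_or_top : ∀ x : D, val x ≤ 0 ∨ val x = ⊤
  val_eq_top_iff : ∀ x : D, val x = ⊤ ↔ x = 0
  val_nonneg_iff : ∀ x : D, 0 ≤ val x ↔ ∃ z : k, phi z = x
  val_smul_of_nonpos : ∀ a ∈ O, ∀ x : D, v a + val x ≤ 0 → val (smul a x) = v a + val x
  val_smul_of_pos : ∀ a ∈ O, ∀ x : D, 0 < v a + val x → val (smul a x) = ⊤
  val_add : ∀ x y : D, min (val x) (val y) ≤ val (x + y)
  smul_of_val_le : ∀ x y : D, val x ≤ val y → ∃ a ∈ O, y = smul a x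
  smul_of_val_lt : ∀ x y : D, val x < val y → ∃ a : K, 0 < v a ∧ y = smul a x
  val_unbounded : ∀ γ : Γ, ∃ x : D, val x ≤ (γ : WithTop Γ)

namespace PreDiffeoValued
variable {p : ℕ} {K : Type*} [Field K] {Γ : Type*} [AddCommGroup Γ] [LinearOrder Γ] [IsOrderedAddMonoid Γ]
  {k : Type*} [Field k] {D : Type*} [AddCommGroup D]

def Q (P : PreDiffeoValued p K Γ k D) : Set K := {x | x ∈ P.R ∧ P.d x = 0}

def IsDense (P : PreDiffeoValued p K Γ k D) : Prop :=
  ∀ a ∈ P.O, ∀ γ : Γ, ∃ q ∈ P.Q, (γ : WithTop Γ) < P.v (a - q)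

end PreDiffeoValued

section Aux

variable {p : ℕ} {K : Type*} [Field K] {Γ : Type*} [AddCommGroup Γ] [LinearOrder Γ] [IsOrderedAddMonoid Γ]
  {k : Type*} [Field k] {D : Type*} [AddCommGroup D]
  (P : PreDiffeoValuedS p K Γ k D)

lemma pdv_v_one : P.v 1 = 0 := by
  have h := P.v_mul 1 1
  rw [mul_one] at h
  have h1 : P.v 1 ≠ ⊤ := fun ht => one_ne_zero ((P.v_eq_top_iff 1).mp ht)
  obtain ⟨γ, hγ⟩ := WithTop.ne_top_iff_exists.mp h1
  rw [← hγ, ← WithTop.coe_add, WithTop.coe_eq_coe] at h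
  rw [← hγ, WithTop.coe_eq_zero]
  exact (left_eq_add.mp h)

lemma pdv_v_neg (x : K) : P.v (-x) = P.v x := by
  have hm1 : P.v (-1 : K) = 0 := by
    have h := P.v_mul (-1 : K) (-1)
    rw [neg_mul_neg, one_mul, pdv_v_one] at h
    have h1 : P.v (-1 : K) ≠ ⊤ :=
      fun ht => neg_ne_zero.mpr one_ne_zero ((P.v_eq_top_iff _).mp ht)
    obtain ⟨γ, hγ⟩ := WithTop.ne_top_iff_exists.mp h1
    rw [← hγ, ← WithTop.coe_add] at h
    rw [← hγ, WithTop.coe_eq_zero]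
    have h2 : ((γ + γ : Γ) : WithTop Γ) = ((0 : Γ) : WithTop Γ) := by
      rw [WithTop.coe_zero]; exact h.symm
    have hh : γ + γ = 0 := WithTop.coe_eq_coe.mp h2
    rcases lt_trichotomy γ 0 with hlt | he | hgt
    · exact absurd (hh ▸ add_neg hlt hlt) (lt_irrefl (0 : Γ))
    · exact he
    · exact absurd (hh ▸ add_pos hgt hgt) (lt_irrefl (0 : Γ))
  have := P.v_mul (-1 : K) x
  rw [neg_one_mul, hm1, zero_add] at this
  exact this

lemma pdv_d_zero : P.d 0 = 0 := by
  have h := P.d_add 0 P.R.zero_mem 0 P.R.zero_mem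
  rw [add_zero] at h
  exact (left_eq_add.mp h)

lemma pdv_d_one : P.d 1 = 0 := by
  have h := P.d_leibniz 1 P.R.one_mem 1 P.R.one_mem
  rw [mul_one, P.res_one, one_mul] at h
  exact (left_eq_add.mp h)

lemma pdv_Q_zero : (0 : K) ∈ P.Q := ⟨P.R.zero_mem, pdv_d_zero P⟩

lemma pdv_Q_one : (1 : K) ∈ P.Q := ⟨P.R.one_mem, pdv_d_one P⟩

lemma pdv_Q_add {a b : K} (ha : a ∈ P.Q) (hb : b ∈ P.Q) : a + b ∈ P.Q := by
  refine ⟨P.R.add_mem ha.1 hb.1, ?_⟩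
  rw [P.d_add a ha.1 b hb.1, ha.2, hb.2, add_zero]

lemma pdv_Q_mul {a b : K} (ha : a ∈ P.Q) (hb : b ∈ P.Q) : a * b ∈ P.Q := by
  refine ⟨P.R.mul_mem ha.1 hb.1, ?_⟩
  rw [P.d_leibniz a ha.1 b hb.1, ha.2, hb.2, mul_zero, mul_zero, add_zero]

lemma pdv_Q_subset_O {a : K} (ha : a ∈ P.Q) : a ∈ P.O := P.R_le_O ha.1

lemma pdv_smul_zero {a : K} (ha : a ∈ P.O) : P.smul a 0 = 0 := by
  have h := P.smul_add a ha 0 0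
  rw [add_zero] at h
  exact (left_eq_add.mp h)

lemma pdv_pi_one : P.pi 1 = 0 :=
  (P.pi_eq_zero_iff 1 P.O.one_mem).mpr ⟨P.R.one_mem, pdv_d_one P⟩

lemma pdv_exists_Q_val (hdense : P.toPreDiffeoValued.IsDense) (γ : Γ)
    (hγ : (0 : WithTop Γ) ≤ (γ : WithTop Γ)) :
    ∃ q ∈ P.Q, P.v q = (γ : WithTop Γ) := by
  obtain ⟨x, hx⟩ := P.v_surj γ
  have hxO : x ∈ P.O := (P.mem_O_iff x).mpr (hx ▸ hγ)
  obtain ⟨q, hq, hvq⟩ := hdense x hxO γ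
  refine ⟨q, hq, le_antisymm ?_ ?_⟩
  · have h1 := P.v_add q (x - q)
    rw [show q + (x - q) = x by ring, hx] at h1
    by_contra hlt
    push_neg at hlt
    exact absurd (lt_of_lt_of_le (lt_min hlt hvq) h1) (lt_irrefl _)
  · have h2 := P.v_add x (-(x - q))
    rw [show x + -(x - q) = q by ring, pdv_v_neg] at h2
    exact le_trans (le_min hx.ge (le_of_lt hvq)) h2

lemma pdv_exists_mem_I (hdense : P.toPreDiffeoValued.IsDense) :
    ∃ i ∈ P.Q, 0 < P.v i ∧ i ≠ 0 := by
  by_cases hΓ : ∃ γ : Γ, 0 < γ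
  · obtain ⟨γ, hγ⟩ := hΓ
    obtain ⟨q, hq, hvq⟩ := pdv_exists_Q_val P hdense γ (le_of_lt (by exact_mod_cast hγ))
    refine ⟨q, hq, ?_, ?_⟩
    · rw [hvq]; exact_mod_cast hγ
    · intro h0
      rw [h0, (P.v_eq_top_iff 0).mpr rfl] at hvq
      exact (WithTop.coe_ne_top hvq.symm)
  · push_neg at hΓ
    obtain ⟨r, hrR, hdr⟩ := P.d_surjective 1
    obtain ⟨q, hq, hv⟩ := hdense r (P.R_le_O hrR) 0
    have htop : P.v (r - q) = ⊤ := by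
      by_contra hne
      obtain ⟨δ, hδ⟩ := WithTop.ne_top_iff_exists.mp hne
      rw [← hδ] at hv
      exact absurd (by exact_mod_cast hv : (0 : Γ) < δ) (not_lt.mpr (hΓ δ))
    have hrq : r = q := sub_eq_zero.mp ((P.v_eq_top_iff (r - q)).mp htop)
    exact absurd (hrq ▸ hdr : P.d q = 1) (by rw [hq.2]; exact zero_ne_one)

lemma pdv_O_mul_mem_Q (hdense : P.toPreDiffeoValued.IsDense) {a : K} (ha : a ∈ P.O) :
    ∃ i ∈ P.Q, i ≠ 0 ∧ a * i ∈ P.Q := by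
  by_cases hpa : P.pi a = 0
  · exact ⟨1, pdv_Q_one P, one_ne_zero, by rw [mul_one]; exact (P.pi_eq_zero_iff a ha).mp hpa⟩
  · have hne : P.val (P.pi a) ≠ ⊤ := fun ht => hpa ((P.val_eq_top_iff _).mp ht)
    have hval := (P.val_nonpos_or_top (P.pi a)).resolve_right hne
    obtain ⟨δ, hδ⟩ := WithTop.ne_top_iff_exists.mp hne
    obtain ⟨i₀, hi₀Q, hi₀pos, hi₀ne⟩ := pdv_exists_mem_I P hdense
    have hvi₀ne : P.v i₀ ≠ ⊤ := fun ht => hi₀ne ((P.v_eq_top_iff _).mp ht)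
    obtain ⟨γ₁, hγ₁⟩ := WithTop.ne_top_iff_exists.mp hvi₀ne
    have hγ₁pos : 0 < γ₁ := by
      rw [← hγ₁] at hi₀pos; exact_mod_cast hi₀pos
    have hδ0 : δ ≤ 0 := by rw [← hδ] at hval; exact_mod_cast hval
    have hγnn : (0 : WithTop Γ) ≤ ((γ₁ - δ : Γ) : WithTop Γ) := by
      exact_mod_cast sub_nonneg.mpr (hδ0.trans hγ₁pos.le)
    obtain ⟨q, hqQ, hvq⟩ := pdv_exists_Q_val P hdense (γ₁ - δ) hγnn
    have hqO : q ∈ P.O := P.R_le_O hqQ.1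
    have hqne : q ≠ 0 := by
      intro h0
      rw [h0, (P.v_eq_top_iff 0).mpr rfl] at hvq
      exact (WithTop.coe_ne_top hvq.symm)
    have hpos : 0 < P.v q + P.val (P.pi a) := by
      rw [hvq, ← hδ, ← WithTop.coe_add]
      exact_mod_cast (by rw [sub_add_cancel]; exact hγ₁pos : (0 : Γ) < γ₁ - δ + δ)
    have hsm0 : P.smul q (P.pi a) = 0 :=
      (P.val_eq_top_iff _).mp (P.val_smul_of_pos q hqO (P.pi a) hpos)
    have hpi : P.pi (q * a) = 0 := by
      rw [P.pi_qsmul q hqQ.1 hqQ.2 a ha, hsm0]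
    have hqa : q * a ∈ P.Q := (P.pi_eq_zero_iff _ (P.O.mul_mem hqO ha)).mp hpi
    exact ⟨q, hqQ, hqne, by rwa [mul_comm]⟩

end Aux

/-- Assume the pre-diffeo-valued field structure is dense and set
`I := Q ∩ M`.  Then: (1) `R ≠ K` and `Q ≠ K`; (2) `I` is a proper ideal of `Q`, and
`r·i ∈ I` for all `r ∈ R`, `i ∈ I`, so `I` is also a proper ideal of `R`;
(3) every element of `K` is a quotient of elements of `Q` (so `Frac Q = Frac R = K`);
(4) `Q` is a local ring with maximal ideal `I`; (5) `I ≠ 0`. -/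
theorem basic_structure_of_dense_preDiffeoValued
    {p : ℕ} (hp : p.Prime) {K : Type*} [Field K] [CharP K p]
    {Γ : Type*} [AddCommGroup Γ] [LinearOrder Γ] [IsOrderedAddMonoid Γ]
    {k : Type*} [Field k] {D : Type*} [AddCommGroup D]
    (P : PreDiffeoValuedS p K Γ k D)
    (hdense : P.toPreDiffeoValued.IsDense) :
    -- (1) `R` and `Q` are proper subrings of `K`
    (((P.R : Set K) ≠ Set.univ) ∧ (P.Q ≠ Set.univ)) ∧
    -- (2) `I = Q ∩ M` is a proper ideal of `Q`, and is an ideal of `R` as well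
    (((1 : K) ∉ P.Q ∩ {x : K | 0 < P.v x}) ∧
      (∀ i ∈ P.Q ∩ {x : K | 0 < P.v x}, ∀ j ∈ P.Q ∩ {x : K | 0 < P.v x},
        i + j ∈ P.Q ∩ {x : K | 0 < P.v x}) ∧
      (∀ q ∈ P.Q, ∀ i ∈ P.Q ∩ {x : K | 0 < P.v x},
        q * i ∈ P.Q ∩ {x : K | 0 < P.v x}) ∧
      (∀ r ∈ P.R, ∀ i ∈ P.Q ∩ {x : K | 0 < P.v x},
        r * i ∈ P.Q ∩ {x : K | 0 < P.v x})) ∧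
    -- (3) `Frac(Q) = Frac(R) = K`
    (∀ x : K, ∃ q₁ ∈ P.Q, ∃ q₂ ∈ P.Q, q₂ ≠ 0 ∧ x = q₁ / q₂) ∧
    -- (4) `Q` is local with maximal ideal `I`
    (∀ q ∈ P.Q, q ∉ P.Q ∩ {x : K | 0 < P.v x} → ∃ q' ∈ P.Q, q * q' = 1) ∧
    -- (5) `I ≠ 0`
    (∃ i ∈ P.Q ∩ {x : K | 0 < P.v x}, i ≠ (0 : K)) := by
  obtain ⟨i, hiQ, hipos, hine⟩ := pdv_exists_mem_I P hdense
  have hiO : i ∈ P.O := pdv_Q_subset_O P hiQ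
  have hsum : P.v i + P.v i⁻¹ = 0 := by
    have h := P.v_mul i i⁻¹
    rw [mul_inv_cancel₀ hine, pdv_v_one] at h
    exact h.symm
  have hinvO : ¬ (0 : WithTop Γ) ≤ P.v i⁻¹ := by
    intro hge
    have h := lt_of_lt_of_le hipos (le_add_of_nonneg_right hge)
    rw [hsum] at h
    exact lt_irrefl _ h
  refine ⟨⟨?_, ?_⟩, ⟨?_, ?_, ?_, ?_⟩, ?_, ?_, ⟨i, ⟨hiQ, hipos⟩, hine⟩⟩
  · -- R ≠ univ
    intro h
    have hmem : i⁻¹ ∈ (P.R : Set K) := by rw [h]; trivial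
    exact hinvO ((P.mem_O_iff i⁻¹).mp (P.R_le_O hmem))
  · -- Q ≠ univ
    intro h
    have hmem : i⁻¹ ∈ P.Q := by rw [h]; trivial
    exact hinvO ((P.mem_O_iff i⁻¹).mp (P.R_le_O hmem.1))
  · -- 1 ∉ I
    rintro ⟨-, h1⟩
    have h1' : (0 : WithTop Γ) < P.v 1 := h1
    rw [pdv_v_one] at h1'
    exact lt_irrefl _ h1'
  · -- additive closure
    rintro x ⟨hxQ, hxM⟩ y ⟨hyQ, hyM⟩
    exact ⟨pdv_Q_add P hxQ hyQ, lt_of_lt_of_le (lt_min hxM hyM) (P.v_add x y)⟩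
  · -- Q-multiplicative closure
    rintro q hqQ x ⟨hxQ, hxM⟩
    refine ⟨pdv_Q_mul P hqQ hxQ, ?_⟩
    show (0 : WithTop Γ) < P.v (q * x)
    rw [P.v_mul]
    have h0 : (0 : WithTop Γ) ≤ P.v q := (P.mem_O_iff q).mp (pdv_Q_subset_O P hqQ)
    calc (0 : WithTop Γ) < P.v x := hxM
      _ = 0 + P.v x := (zero_add _).symm
      _ ≤ P.v q + P.v x := add_le_add_left h0 _
  · -- R-multiplicative closure
    rintro r hrR x ⟨hxQ, hxM⟩
    have hxO := pdv_Q_subset_O P hxQ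
    have hres : P.res x = 0 := (P.res_eq_zero_iff x hxO).mpr hxM
    refine ⟨⟨P.R.mul_mem hrR hxQ.1, ?_⟩, ?_⟩
    · rw [P.d_leibniz r hrR x hxQ.1, hxQ.2, mul_zero, hres, zero_mul, add_zero]
    · show (0 : WithTop Γ) < P.v (r * x)
      rw [P.v_mul]
      have h0 : (0 : WithTop Γ) ≤ P.v r := (P.mem_O_iff r).mp (P.R_le_O hrR)
      calc (0 : WithTop Γ) < P.v x := hxM
        _ = 0 + P.v x := (zero_add _).symm
        _ ≤ P.v r + P.v x := add_le_add_left h0 _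
  · -- Frac Q = K
    intro x
    by_cases hx : x ∈ P.O
    · obtain ⟨j, hjQ, hjne, hxj⟩ := pdv_O_mul_mem_Q P hdense hx
      exact ⟨x * j, hxj, j, hjQ, hjne, by field_simp⟩
    · have hxne : x ≠ 0 := fun h => hx (h ▸ P.O.zero_mem)
      have hxinvO : x⁻¹ ∈ P.O := by
        rw [P.mem_O_iff]
        by_contra hneg
        push_neg at hneg
        have hvx : P.v x < 0 := not_le.mp (fun hle => hx ((P.mem_O_iff x).mpr hle))
        have hsx : P.v x + P.v x⁻¹ = 0 := by
          have h := P.v_mul x x⁻¹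
          rw [mul_inv_cancel₀ hxne, pdv_v_one] at h
          exact h.symm
        have h1 : P.v x + P.v x⁻¹ ≤ P.v x + 0 := add_le_add_right hneg.le _
        rw [add_zero] at h1
        have h2 := lt_of_le_of_lt h1 hvx
        rw [hsx] at h2
        exact lt_irrefl _ h2
      obtain ⟨j, hjQ, hjne, hxj⟩ := pdv_O_mul_mem_Q P hdense hxinvO
      refine ⟨j, hjQ, x⁻¹ * j, hxj, mul_ne_zero (inv_ne_zero hxne) hjne, ?_⟩
      rw [eq_div_iff (mul_ne_zero (inv_ne_zero hxne) hjne), ← mul_assoc,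
        mul_inv_cancel₀ hxne, one_mul]
  · -- locality
    intro q hqQ hqnI
    have hqO : q ∈ P.O := pdv_Q_subset_O P hqQ
    have hv0 : P.v q = 0 :=
      le_antisymm (not_lt.mp fun h => hqnI ⟨hqQ, h⟩) ((P.mem_O_iff q).mp hqO)
    have hqne : q ≠ 0 := by
      intro h
      subst h
      rw [(P.v_eq_top_iff 0).mpr rfl] at hv0
      simp at hv0
    have hsx : P.v q + P.v q⁻¹ = 0 := by
      have h := P.v_mul q q⁻¹
      rw [mul_inv_cancel₀ hqne, pdv_v_one] at h
      exact h.symm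
    rw [hv0, zero_add] at hsx
    have hqiO : q⁻¹ ∈ P.O := (P.mem_O_iff _).mpr (le_of_eq hsx.symm)
    have h1 : P.smul q (P.pi q⁻¹) = 0 := by
      rw [← P.pi_qsmul q hqQ.1 hqQ.2 q⁻¹ hqiO, mul_inv_cancel₀ hqne, pdv_pi_one]
    have h2 : P.pi q⁻¹ = 0 := by
      have h3 := P.mul_smul q⁻¹ hqiO q hqO (P.pi q⁻¹)
      rw [inv_mul_cancel₀ hqne, P.one_smul, h1] at h3
      rw [h3]
      exact pdv_smul_zero P hqiO
    exact ⟨q⁻¹, (P.pi_eq_zero_iff q⁻¹ hqiO).mp h2, mul_inv_cancel₀ hqne⟩
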